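/- arXiv:2006.04367 — 2 statements merged into one kernel-verified Lean document; each statement's English description precedes it below -/
import Mathlib

section
/- Consider the estimator error recursion e^D_t = (1 - s_t)(A e^D_{t-1} + w_{t-1}) with e^D_{-1} = 0, where (s_t) are i.i.d. Bernoulli(p_s) random variables with p_s ∈ (0,1], independent of the zero-mean noise (w_t) with E[||w_t||^2] ≤ C_2 < ∞, and A has spectral norm ||A|| ≤ 1. Then there exists γ^D < ∞ such that E[||e^D_t||^2] ≤ γ^D for all t. Concretely, one may take γ^D = 2 C_2 (1-p_s) / p_s^2 when ||A|| ≤ 1 and p_s > 0 (or any valid finite bound). -/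
open MeasureTheory ProbabilityTheory

/-- Mean-square boundedness of the dropout-compensator error: for the recursion
`e (t+1) = (1 - s (t+1)) • (A (e t) + w t)` with `e 0 = 0`, where the `s t` are
Bernoulli(p) with `p ∈ (0,1]`, each `s (t+1)` independent of `(e t, w t)`, the noise
is zero mean with `E[‖w t‖²] ≤ C₂`, and `‖A‖ ≤ 1`, there exists `γD < ∞` with
`E[‖e t‖²] ≤ γD` for all `t`. -/
theorem stmt2
    {Ω : Type*} [MeasurableSpace Ω] (μ : Measure Ω) [IsProbabilityMeasure μ]
    (d : ℕ)
    (A : EuclideanSpace ℝ (Fin d) →L[ℝ] EuclideanSpace ℝ (Fin d))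
    (hA : ‖A‖ ≤ 1)
    (s : ℕ → Ω → ℝ) (p : ℝ) (hp0 : 0 < p) (hp1 : p ≤ 1)
    (hs01 : ∀ t ω, s t ω = 0 ∨ s t ω = 1)
    (hsmeas : ∀ t, Measurable (s t))
    (hsBernoulli : ∀ t, μ (s t ⁻¹' {1}) = ENNReal.ofReal p)
    (w : ℕ → Ω → EuclideanSpace ℝ (Fin d)) (C₂ : ℝ)
    (hwmeas : ∀ t, AEStronglyMeasurable (w t) μ)
    (hwint : ∀ t, Integrable (fun ω => ‖w t ω‖ ^ 2) μ)
    (hwmean : ∀ t, ∫ ω, w t ω ∂μ = 0)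
    (hwvar : ∀ t, ∫ ω, ‖w t ω‖ ^ 2 ∂μ ≤ C₂)
    (e : ℕ → Ω → EuclideanSpace ℝ (Fin d))
    (he0 : ∀ ω, e 0 ω = 0)
    (herec : ∀ t ω, e (t + 1) ω = (1 - s (t + 1) ω) • (A (e t ω) + w t ω))
    (hindep : ∀ t, IndepFun (s (t + 1)) (fun ω => (e t ω, w t ω)) μ) :
    ∃ γD : ℝ, ∀ t, ∫ ω, ‖e t ω‖ ^ 2 ∂μ ≤ γD := by
  set C : ℝ := max C₂ 0 with hCdef
  have hC0 : 0 ≤ C := le_max_right _ _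
  have hq0 : 0 ≤ 1 - p := by linarith
  set B : ℝ := (1 - p) * (1 + 2 / p) * C * (2 / p) with hBdef
  have hB0 : 0 ≤ B := by positivity
  refine ⟨B, ?_⟩
  suffices h : ∀ t, AEStronglyMeasurable (e t) μ ∧
      Integrable (fun ω => ‖e t ω‖ ^ 2) μ ∧ ∫ ω, ‖e t ω‖ ^ 2 ∂μ ≤ B by
    exact fun t => (h t).2.2
  intro t
  induction t with
  | zero =>
    have he0' : e 0 = fun _ => (0 : EuclideanSpace ℝ (Fin d)) := funext he0
    have hz : (fun ω => ‖e 0 ω‖ ^ 2) = fun _ => (0 : ℝ) := by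
      funext ω; simp [he0 ω]
    refine ⟨?_, ?_, ?_⟩
    · rw [he0']; exact aestronglyMeasurable_const
    · rw [hz]; exact integrable_const 0
    · rw [hz]; simpa using hB0
  | succ t ih =>
    obtain ⟨hem, heint, hebd⟩ := ih
    set v : Ω → EuclideanSpace ℝ (Fin d) := fun ω => A (e t ω) + w t ω with hvdef
    have hvm : AEStronglyMeasurable v μ := (A.continuous.comp_aestronglyMeasurable hem).add (hwmeas t)
    have hvm2 : AEStronglyMeasurable (fun ω => ‖v ω‖ ^ 2) μ := (hvm.norm.pow 2)
    -- pointwise bound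
    have hvbd : ∀ ω, ‖v ω‖ ^ 2 ≤ (1 + p / 2) * ‖e t ω‖ ^ 2 + (1 + 2 / p) * ‖w t ω‖ ^ 2 := by
      intro ω
      have h1 : ‖v ω‖ ≤ ‖e t ω‖ + ‖w t ω‖ := by
        calc ‖v ω‖ ≤ ‖A (e t ω)‖ + ‖w t ω‖ := norm_add_le _ _
        _ ≤ ‖e t ω‖ + ‖w t ω‖ := by
            have h2 : ‖A (e t ω)‖ ≤ ‖e t ω‖ := by
              nlinarith [A.le_opNorm (e t ω), norm_nonneg (e t ω)]
            linarith
      have ha : (0:ℝ) ≤ ‖e t ω‖ := norm_nonneg _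
      have hb : (0:ℝ) ≤ ‖w t ω‖ := norm_nonneg _
      have hv0 : (0:ℝ) ≤ ‖v ω‖ := norm_nonneg _
      have hpp : (2 / p) * p = 2 := by field_simp
      nlinarith [sq_nonneg (p * ‖e t ω‖ - 2 * ‖w t ω‖), sq_nonneg (‖e t ω‖ + ‖w t ω‖),
        mul_le_mul_of_nonneg_left h1 hv0, mul_le_mul_of_nonneg_right h1 (by linarith : (0:ℝ) ≤ ‖e t ω‖ + ‖w t ω‖)]
    have hvint : Integrable (fun ω => ‖v ω‖ ^ 2) μ := by
      refine Integrable.mono' (((heint.const_mul (1 + p / 2)).add ((hwint t).const_mul (1 + 2 / p)))) hvm2 ?_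
      filter_upwards with ω
      have := hvbd ω
      have h2p : (0:ℝ) ≤ 1 + 2 / p := by positivity
      simp only [Real.norm_eq_abs, abs_of_nonneg (by positivity : (0:ℝ) ≤ ‖v ω‖ ^ 2)]
      exact this
    -- identity ‖e (t+1) ω‖^2 = (1 - s (t+1) ω) * ‖v ω‖^2
    have hid : ∀ ω, ‖e (t + 1) ω‖ ^ 2 = (1 - s (t + 1) ω) * ‖v ω‖ ^ 2 := by
      intro ω
      rw [herec t ω]
      rw [norm_smul]
      rcases hs01 (t + 1) ω with h | h <;> simp [h, mul_pow] <;> ring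
    -- independence of X := 1 - s(t+1) and Y := ‖v‖^2
    have hX : IndepFun (fun ω => 1 - s (t + 1) ω) (fun ω => ‖v ω‖ ^ 2) μ := by
      have hf : Measurable (fun x : ℝ => 1 - x) := measurable_const.sub measurable_id
      have hg : Measurable (fun x : EuclideanSpace ℝ (Fin d) × EuclideanSpace ℝ (Fin d) =>
          ‖A x.1 + x.2‖ ^ 2) := by
        apply Measurable.pow_const
        exact ((A.continuous.comp continuous_fst).add continuous_snd).norm.measurable
      exact (hindep t).comp hf hg
    have hsint : Integrable (s (t + 1)) μ := by
      refine Integrable.mono' (integrable_const 1) ((hsmeas (t+1)).aestronglyMeasurable) ?_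
      filter_upwards with ω
      rcases hs01 (t + 1) ω with h | h <;> simp [h]
    have hXint : Integrable (fun ω => 1 - s (t + 1) ω) μ :=
      (integrable_const 1).sub hsint
    -- E[1 - s] = 1 - p
    have hEs : ∫ ω, s (t + 1) ω ∂μ = p := by
      have hset : MeasurableSet (s (t + 1) ⁻¹' {1}) := hsmeas (t+1) (measurableSet_singleton 1)
      have : (fun ω => s (t + 1) ω) = (s (t + 1) ⁻¹' {1}).indicator (fun _ => (1:ℝ)) := by
        funext ω
        rcases hs01 (t + 1) ω with h | h
        · simp [Set.indicator, h, Set.mem_preimage]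
        · simp [Set.indicator, h, Set.mem_preimage]
      rw [this, integral_indicator_const _ hset, measureReal_def, hsBernoulli (t+1),
        ENNReal.toReal_ofReal hp0.le]
      simp
    have hEX : ∫ ω, (1 - s (t + 1) ω) ∂μ = 1 - p := by
      rw [integral_sub (integrable_const 1) hsint]
      simp [hEs]
    -- integral of Y
    have hEY : ∫ ω, ‖v ω‖ ^ 2 ∂μ ≤ (1 + p / 2) * B + (1 + 2 / p) * C := by
      have step : ∫ ω, ‖v ω‖ ^ 2 ∂μ ≤
          ∫ ω, ((1 + p / 2) * ‖e t ω‖ ^ 2 + (1 + 2 / p) * ‖w t ω‖ ^ 2) ∂μ := by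
        refine integral_mono_of_nonneg ?_ ((heint.const_mul _).add ((hwint t).const_mul _)) ?_
        · filter_upwards with ω; positivity
        · filter_upwards with ω; exact hvbd ω
      have hsplit : ∫ ω, ((1 + p / 2) * ‖e t ω‖ ^ 2 + (1 + 2 / p) * ‖w t ω‖ ^ 2) ∂μ
          = (1 + p / 2) * ∫ ω, ‖e t ω‖ ^ 2 ∂μ + (1 + 2 / p) * ∫ ω, ‖w t ω‖ ^ 2 ∂μ := by
        rw [integral_add (heint.const_mul _) ((hwint t).const_mul _),
          integral_const_mul, integral_const_mul]
      have hwC : ∫ ω, ‖w t ω‖ ^ 2 ∂μ ≤ C := le_trans (hwvar t) (le_max_left _ _)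
      have h1 : (0:ℝ) ≤ 1 + p / 2 := by positivity
      have h2 : (0:ℝ) ≤ 1 + 2 / p := by positivity
      calc ∫ ω, ‖v ω‖ ^ 2 ∂μ ≤ _ := step
        _ = _ := hsplit
        _ ≤ (1 + p / 2) * B + (1 + 2 / p) * C := by
            gcongr
    -- main integrability of ‖e (t+1)‖^2
    have hprod : Integrable (fun ω => (1 - s (t + 1) ω) * ‖v ω‖ ^ 2) μ := by
      refine Integrable.bdd_mul (c := 1) hvint
        ((measurable_const.sub (hsmeas (t+1))).aestronglyMeasurable) ?_
      filter_upwards with ω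
      rcases hs01 (t + 1) ω with h | h <;> simp [h]
    have heint' : Integrable (fun ω => ‖e (t + 1) ω‖ ^ 2) μ := by
      refine hprod.congr ?_
      filter_upwards with ω
      exact (hid ω).symm
    have hem' : AEStronglyMeasurable (e (t + 1)) μ := by
      have : AEStronglyMeasurable (fun ω => (1 - s (t + 1) ω) • (A (e t ω) + w t ω)) μ :=
        ((measurable_const.sub (hsmeas (t+1))).aestronglyMeasurable).smul hvm
      exact this.congr (by filter_upwards with ω; exact (herec t ω).symm)
    refine ⟨hem', heint', ?_⟩
    have hEint : ∫ ω, ‖e (t + 1) ω‖ ^ 2 ∂μ = (1 - p) * ∫ ω, ‖v ω‖ ^ 2 ∂μ := by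
      have : ∫ ω, ‖e (t + 1) ω‖ ^ 2 ∂μ = ∫ ω, (1 - s (t + 1) ω) * ‖v ω‖ ^ 2 ∂μ := by
        apply integral_congr_ae
        filter_upwards with ω
        exact hid ω
      have hmul := hX.integral_fun_mul_eq_mul_integral hXint.aestronglyMeasurable hvint.aestronglyMeasurable
      exact this.trans (hmul.trans (by rw [hEX]))
    rw [hEint]
    have hYnn : 0 ≤ ∫ ω, ‖v ω‖ ^ 2 ∂μ := by
      apply integral_nonneg; intro ω; positivity
    have key : (1 - p) * ((1 + p / 2) * B + (1 + 2 / p) * C) ≤ B := by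
      have hBp : B * (p / 2) = (1 - p) * (1 + 2 / p) * C := by
        rw [hBdef]; field_simp
      nlinarith [mul_nonneg hq0 hC0, mul_nonneg (mul_nonneg hq0 hB0) hp0.le,
        mul_nonneg hB0 (mul_nonneg hp0.le hp0.le)]
    calc (1 - p) * ∫ ω, ‖v ω‖ ^ 2 ∂μ ≤ (1 - p) * ((1 + p / 2) * B + (1 + 2 / p) * C) := by
          gcongr
      _ ≤ B := key
end

section
/- One-step drift implies geometric decay of expected excursions in a scalar surrogate: let (X_t) be a real-valued adapted process with |X_{t+1} - X_t| ≤ b a.s. for some b > 0, and suppose E[X_{t+1} - X_t | F_t] ≤ -ζ whenever X_t > c, for constants ζ > 0, c ≥ 0. Then sup_t E[max(X_t, 0)²] < ∞ provided E[max(X_0,0)²] < ∞. -/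
open MeasureTheory

private lemma sq_max_le_exp {lam x : ℝ} (hlam : 0 < lam) :
    (max x 0) ^ 2 ≤ 4 / lam ^ 2 * Real.exp (lam * x) := by
  rcases le_or_gt x 0 with hx | hx
  · rw [max_eq_right hx]
    norm_num
    positivity
  · rw [max_eq_left hx.le]
    have hu : 0 ≤ lam * x / 2 := by positivity
    have h1 : lam * x / 2 ≤ Real.exp (lam * x / 2) :=
      le_trans (by linarith) (Real.add_one_le_exp _)
    have h2 : (lam * x / 2) ^ 2 ≤ Real.exp (lam * x / 2) ^ 2 :=
      pow_le_pow_left₀ hu h1 2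
    have h3 : Real.exp (lam * x / 2) ^ 2 = Real.exp (lam * x) := by
      rw [sq, ← Real.exp_add]
      congr 1
      ring
    have h4 : (lam * x / 2) ^ 2 ≤ Real.exp (lam * x) := h3 ▸ h2
    have hlam2 : (0:ℝ) < lam ^ 2 := by positivity
    rw [div_mul_eq_mul_div, le_div_iff₀ hlam2]
    nlinarith [h4]

private lemma sq_le_two_sq_add_two_sq {z x y : ℝ} (hz : 0 ≤ z) (hx : 0 ≤ x)
    (hy : 0 ≤ y) (h : z ≤ x + y) : z ^ 2 ≤ 2 * x ^ 2 + 2 * y ^ 2 := by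
  nlinarith [sq_nonneg (x - y), mul_le_mul h h hz (by linarith : (0:ℝ) ≤ x + y)]

set_option maxHeartbeats 400000 in
/-- Scalar geometric drift: if `(X t)` is adapted, has a.s. bounded increments
`|X (t+1) - X t| ≤ b`, and satisfies the conditional drift
`E[X (t+1) - X t | ℱ t] ≤ -ζ` on the event `{X t > c}`, with `0 < ζ ≤ b`, `c ≥ 0`,
and `E[max(X 0, 0)²] < ∞`, then `sup_t E[max(X t, 0)²] < ∞`. -/
theorem stmt17
    {Ω : Type*} {mΩ : MeasurableSpace Ω} (μ : Measure Ω) [IsProbabilityMeasure μ]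
    (ℱ : Filtration ℕ mΩ) (X : ℕ → Ω → ℝ)
    (b ζ c : ℝ) (hb : 0 < b) (hζ : 0 < ζ) (hζb : ζ ≤ b) (hc : 0 ≤ c)
    (hadapted : Adapted ℱ X)
    (hXint : ∀ t, Integrable (X t) μ)
    (hincr : ∀ t, ∀ᵐ ω ∂μ, |X (t + 1) ω - X t ω| ≤ b)
    (hdrift : ∀ t, ∀ᵐ ω ∂μ,
      c < X t ω → (μ[fun ω' => X (t + 1) ω' - X t ω'|ℱ t]) ω ≤ -ζ)
    (h0 : Integrable (fun ω => max (X 0 ω) 0 ^ 2) μ) :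
    ∃ γ : ℝ, ∀ t, ∫ ω, max (X t ω) 0 ^ 2 ∂μ ≤ γ := by
  classical
  -- constants
  obtain ⟨A, hAc, hAb, hA0⟩ : ∃ A : ℝ, c ≤ A ∧ b ≤ A ∧ 0 < A :=
    ⟨max c b, le_max_left _ _, le_max_right _ _,
      lt_of_lt_of_le hb (le_max_right _ _)⟩
  obtain ⟨lam, hlam0, hlamb, hlam_sq⟩ :
      ∃ lam : ℝ, 0 < lam ∧ lam * b ≤ 1 ∧ lam ^ 2 * b ^ 2 ≤ lam * ζ / 2 := by
    refine ⟨min (1 / b) (ζ / (2 * b ^ 2)), lt_min (by positivity) (by positivity),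
      ?_, ?_⟩
    · have h := min_le_left (1 / b) (ζ / (2 * b ^ 2))
      calc min (1 / b) (ζ / (2 * b ^ 2)) * b ≤ (1 / b) * b :=
            mul_le_mul_of_nonneg_right h hb.le
        _ = 1 := by field_simp
    · have hlam0 : 0 < min (1 / b) (ζ / (2 * b ^ 2)) :=
        lt_min (by positivity) (by positivity)
      have h1 : min (1 / b) (ζ / (2 * b ^ 2)) ≤ ζ / (2 * b ^ 2) := min_le_right _ _
      have h2 : min (1 / b) (ζ / (2 * b ^ 2)) * b ^ 2 ≤ ζ / 2 := by
        calc min (1 / b) (ζ / (2 * b ^ 2)) * b ^ 2 ≤ ζ / (2 * b ^ 2) * b ^ 2 :=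
              mul_le_mul_of_nonneg_right h1 (sq_nonneg b)
          _ = ζ / 2 := by field_simp
      calc min (1 / b) (ζ / (2 * b ^ 2)) ^ 2 * b ^ 2
          = min (1 / b) (ζ / (2 * b ^ 2)) * (min (1 / b) (ζ / (2 * b ^ 2)) * b ^ 2) := by
            ring
        _ ≤ min (1 / b) (ζ / (2 * b ^ 2)) * (ζ / 2) :=
            mul_le_mul_of_nonneg_left h2 hlam0.le
        _ = min (1 / b) (ζ / (2 * b ^ 2)) * ζ / 2 := by ring
  have hlamζ : lam * ζ ≤ 1 := by
    have h1 : lam * ζ ≤ lam * b := mul_le_mul_of_nonneg_left hζb hlam0.le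
    linarith
  obtain ⟨ρ, hρ_def, hρ_lt, hρ_nonneg⟩ :
      ∃ ρ : ℝ, ρ = 1 - lam * ζ / 2 ∧ ρ < 1 ∧ 0 ≤ ρ := by
    refine ⟨1 - lam * ζ / 2, rfl, ?_, ?_⟩
    · have : 0 < lam * ζ / 2 := by positivity
      linarith
    · linarith
  obtain ⟨K, hK_def, hK0⟩ : ∃ K : ℝ, K = Real.exp (lam * b) ∧ 0 < K :=
    ⟨Real.exp (lam * b), rfl, Real.exp_pos _⟩
  -- processes
  set Y : ℕ → Ω → ℝ := fun t ω => max (X t ω) 0 with hY_def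
  set R : Ω → ℝ := fun ω => max (Y 0 ω) A with hR_def
  set g : ℕ → Ω → ℝ := fun t ω => Real.exp (lam * (Y t ω - R ω)) with hg_def
  have hYa : ∀ t ω, Y t ω = max (X t ω) 0 := fun _ _ => rfl
  have hRa : ∀ ω, R ω = max (Y 0 ω) A := fun _ => rfl
  have hga : ∀ t ω, g t ω = Real.exp (lam * (Y t ω - R ω)) := fun _ _ => rfl
  -- measurability (before clearing definitions)
  have hXsm : ∀ t, StronglyMeasurable (X t) := fun t => ((hadapted t).mono (ℱ.le t) le_rfl).stronglyMeasurable
  have hYsmX : ∀ t, StronglyMeasurable (fun ω => max (X t ω) 0) := fun t =>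
    ((hXsm t).measurable.max measurable_const).stronglyMeasurable
  have hYsm : ∀ t, StronglyMeasurable (Y t) := fun t =>
    ((hXsm t).measurable.max measurable_const).stronglyMeasurable
  have hRsm : StronglyMeasurable R :=
    ((hYsm 0).measurable.max measurable_const).stronglyMeasurable
  have hgsm : ∀ t, StronglyMeasurable (g t) := fun t =>
    Real.continuous_exp.comp_stronglyMeasurable
      (((hYsm t).sub hRsm).const_mul lam)
  have hYsmF : ∀ t, StronglyMeasurable[ℱ t] (Y t) := fun t =>
    ((hadapted t).max measurable_const).stronglyMeasurable
  have hRsmF : ∀ t, StronglyMeasurable[ℱ t] R := fun t =>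
    ((((hadapted 0).mono (ℱ.mono (Nat.zero_le t)) le_rfl).max
      measurable_const).max measurable_const).stronglyMeasurable
  have hgsmF : ∀ t, StronglyMeasurable[ℱ t] (g t) := fun t =>
    Real.continuous_exp.comp_stronglyMeasurable
      (((hYsmF t).sub (hRsmF t)).const_mul lam)
  clear_value Y R g
  clear hY_def hR_def hg_def
  -- basic facts
  have hY_nonneg : ∀ t ω, 0 ≤ Y t ω := fun t ω => by
    rw [hYa]; exact le_max_right _ _
  have hRA : ∀ ω, A ≤ R ω := fun ω => by rw [hRa]; exact le_max_right _ _
  have hRY : ∀ ω, Y 0 ω ≤ R ω := fun ω => by rw [hRa]; exact le_max_left _ _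
  have hR_nonneg : ∀ ω, 0 ≤ R ω := fun ω => le_trans hA0.le (hRA ω)
  have hg_pos : ∀ t ω, 0 < g t ω := fun t ω => by rw [hga]; exact Real.exp_pos _
  -- increments of Y
  have hYincr : ∀ t, ∀ᵐ ω ∂μ, |Y (t + 1) ω - Y t ω| ≤ b := by
    intro t
    filter_upwards [hincr t] with ω hω
    rw [hYa, hYa]
    exact le_trans (abs_max_sub_max_le_abs _ _ _) hω
  have hYb : ∀ t, ∀ᵐ ω ∂μ, Y t ω - Y 0 ω ≤ t * b := by
    intro t
    induction t with
    | zero => filter_upwards with ω; simp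
    | succ t ih =>
      filter_upwards [ih, hYincr t] with ω h1 h2
      have h3 := abs_le.mp h2
      push_cast
      linarith [h3.2]
  have hgbd : ∀ t, ∀ᵐ ω ∂μ, g t ω ≤ Real.exp (lam * (t * b)) := by
    intro t
    filter_upwards [hYb t] with ω hω
    rw [hga]
    apply Real.exp_le_exp.mpr
    have h2 : Y t ω - R ω ≤ t * b := by linarith [hRY ω]
    exact mul_le_mul_of_nonneg_left h2 hlam0.le
  have hgint : ∀ t, Integrable (g t) μ := by
    intro t
    refine Integrable.mono' (integrable_const (Real.exp (lam * (t * b))))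
      (hgsm t).aestronglyMeasurable ?_
    filter_upwards [hgbd t] with ω hω
    rw [Real.norm_eq_abs, abs_of_pos (hg_pos t ω)]
    exact hω
  have hΔint : ∀ t, Integrable (fun ω => X (t + 1) ω - X t ω) μ :=
    fun t => (hXint (t + 1)).sub (hXint t)
  -- main recursion
  have key : ∀ t, ∫ ω, g (t + 1) ω ∂μ ≤ ρ * ∫ ω, g t ω ∂μ + K := by
    intro t
    set Δ : Ω → ℝ := fun ω => X (t + 1) ω - X t ω with hΔ_def
    set S : Set Ω := {ω | A < X t ω} with hS_def
    set h : Ω → ℝ := S.indicator (g t) with hh_def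
    have hΔa : ∀ ω, Δ ω = X (t + 1) ω - X t ω := fun _ => rfl
    have hSa : ∀ ω, ω ∈ S ↔ A < X t ω := fun _ => Iff.rfl
    have hSF : MeasurableSet[ℱ t] S :=
      measurableSet_lt measurable_const (hadapted t)
    have hha : h = S.indicator (g t) := rfl
    have hΔint' : Integrable Δ μ := by rw [hΔ_def]; exact hΔint t
    have hcond_eq : μ[Δ|ℱ t] = μ[fun ω' => X (t + 1) ω' - X t ω'|ℱ t] := by
      rw [hΔ_def]
    clear_value Δ S h
    clear hΔ_def hS_def hh_def
    have hSm : MeasurableSet S := ℱ.le t _ hSF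
    have hh_smF : StronglyMeasurable[ℱ t] h := hha ▸ (hgsmF t).indicator hSF
    have hh_int : Integrable h μ := hha ▸ (hgint t).indicator hSm
    have hh_nonneg : ∀ ω, 0 ≤ h ω := fun ω =>
      hha ▸ Set.indicator_nonneg (fun ω _ => (hg_pos t ω).le) ω
    have hh_le_g : ∀ ω, h ω ≤ g t ω := fun ω =>
      hha ▸ Set.indicator_le_self' (fun ω _ => (hg_pos t ω).le) ω
    have hh_mem : ∀ ω, ω ∈ S → h ω = g t ω := fun ω hω =>
      hha ▸ Set.indicator_of_mem hω _
    have hh_nmem : ∀ ω, ω ∉ S → h ω = 0 := fun ω hω =>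
      hha ▸ Set.indicator_of_notMem hω _
    have hh_bd : ∀ᵐ ω ∂μ, ‖h ω‖ ≤ Real.exp (lam * (t * b)) := by
      filter_upwards [hgbd t] with ω hω
      rw [Real.norm_eq_abs, abs_of_nonneg (hh_nonneg ω)]
      exact le_trans (hh_le_g ω) hω
    -- pointwise bound
    have hpt : ∀ᵐ ω ∂μ,
        g (t + 1) ω ≤ h ω * (1 + lam * Δ ω + lam * ζ / 2) + K := by
      filter_upwards [hincr t] with ω hω
      have habs := abs_le.mp hω
      by_cases hωS : ω ∈ S
      · have hXgt : A < X t ω := (hSa ω).mp hωS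
        have hX1 : 0 < X (t + 1) ω := by
          have hd : X (t + 1) ω = X t ω + (X (t + 1) ω - X t ω) := by ring
          rw [hd]; linarith [habs.1]
        have hYt1 : Y (t + 1) ω = X (t + 1) ω := by
          rw [hYa]; exact max_eq_left hX1.le
        have hYt : Y t ω = X t ω := by
          rw [hYa]; exact max_eq_left (le_trans hA0.le hXgt.le)
        have h1 : Y (t + 1) ω = Y t ω + Δ ω := by
          rw [hYt1, hYt, hΔa]; ring
        have hgeq : g (t + 1) ω = g t ω * Real.exp (lam * Δ ω) := by
          rw [hga, hga, ← Real.exp_add]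
          congr 1
          rw [h1]; ring
        have hΔb : |Δ ω| ≤ b := by rw [hΔa]; exact hω
        have hΔb2 := abs_le.mp hΔb
        have hexp : Real.exp (lam * Δ ω) ≤ 1 + lam * Δ ω + lam * ζ / 2 := by
          have habs2 : |lam * Δ ω| ≤ 1 := by
            rw [abs_mul, abs_of_pos hlam0]
            calc lam * |Δ ω| ≤ lam * b := mul_le_mul_of_nonneg_left hΔb hlam0.le
              _ ≤ 1 := hlamb
          have hB := Real.abs_exp_sub_one_sub_id_le habs2
          have h2 : Real.exp (lam * Δ ω) - 1 - lam * Δ ω ≤ (lam * Δ ω) ^ 2 :=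
            le_trans (le_abs_self _) hB
          have h3 : (lam * Δ ω) ^ 2 ≤ lam * ζ / 2 := by
            have hΔsq : (Δ ω) ^ 2 ≤ b ^ 2 := sq_le_sq' (by linarith [hΔb2.1]) hΔb2.2
            calc (lam * Δ ω) ^ 2 = lam ^ 2 * (Δ ω) ^ 2 := by ring
              _ ≤ lam ^ 2 * b ^ 2 := mul_le_mul_of_nonneg_left hΔsq (sq_nonneg _)
              _ ≤ lam * ζ / 2 := hlam_sq
          linarith
        rw [hgeq, hh_mem ω hωS]
        nlinarith [mul_le_mul_of_nonneg_left hexp (hg_pos t ω).le, hK0]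
      · have hXle : X t ω ≤ A := not_lt.mp ((not_congr (hSa ω)).mp hωS)
        have hY1 : Y (t + 1) ω ≤ A + b := by
          rw [hYa]
          have hX1 : X (t + 1) ω ≤ A + b := by
            have hd : X (t + 1) ω = X t ω + (X (t + 1) ω - X t ω) := by ring
            rw [hd]; linarith [habs.2]
          exact max_le hX1 (by positivity)
        have hgK : g (t + 1) ω ≤ K := by
          rw [hga, hK_def]
          apply Real.exp_le_exp.mpr
          have h2 : Y (t + 1) ω - R ω ≤ b := by linarith [hRA ω]
          exact mul_le_mul_of_nonneg_left h2 hlam0.le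
        rw [hh_nmem ω hωS]
        linarith
    -- integrability of pieces
    have hh_aesm : AEStronglyMeasurable h μ :=
      (hh_smF.mono (ℱ.le t)).aestronglyMeasurable
    have hhΔ_int : Integrable (fun ω => h ω * Δ ω) μ :=
      Integrable.bdd_mul hΔint' hh_aesm hh_bd
    have hφ_int : Integrable (μ[Δ|ℱ t]) μ := integrable_condExp
    have hhφ_int : Integrable (fun ω => h ω * (μ[Δ|ℱ t]) ω) μ :=
      Integrable.bdd_mul hφ_int hh_aesm hh_bd
    -- ∫ h·Δ = ∫ h·E[Δ|ℱ t]
    have heq1 : ∫ ω, h ω * Δ ω ∂μ = ∫ ω, h ω * (μ[Δ|ℱ t]) ω ∂μ := by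
      have e2 : μ[h * Δ|ℱ t] =ᵐ[μ] h * μ[Δ|ℱ t] :=
        condExp_mul_of_stronglyMeasurable_left hh_smF hhΔ_int hΔint'
      have e1 : ∫ ω, (μ[h * Δ|ℱ t]) ω ∂μ = ∫ ω, (h * Δ) ω ∂μ :=
        integral_condExp (ℱ.le t)
      calc ∫ ω, h ω * Δ ω ∂μ = ∫ ω, (h * Δ) ω ∂μ := rfl
        _ = ∫ ω, (μ[h * Δ|ℱ t]) ω ∂μ := e1.symm
        _ = ∫ ω, (h * μ[Δ|ℱ t]) ω ∂μ := integral_congr_ae e2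
        _ = ∫ ω, h ω * (μ[Δ|ℱ t]) ω ∂μ := rfl
    -- drift bound
    have hdrift2 : ∫ ω, h ω * (μ[Δ|ℱ t]) ω ∂μ ≤ ∫ ω, -ζ * h ω ∂μ := by
      refine integral_mono_ae hhφ_int (hh_int.const_mul (-ζ)) ?_
      filter_upwards [hdrift t] with ω hω
      by_cases hωS : ω ∈ S
      · have h1 : c < X t ω := lt_of_le_of_lt hAc ((hSa ω).mp hωS)
        have h2 : (μ[Δ|ℱ t]) ω ≤ -ζ := by
          rw [hcond_eq]; exact hω h1
        have h3 := mul_le_mul_of_nonneg_left h2 (hh_nonneg ω)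
        linarith
      · rw [hh_nmem ω hωS]
        simp
    have hint_hΔ : ∫ ω, h ω * Δ ω ∂μ ≤ -ζ * ∫ ω, h ω ∂μ := by
      rw [heq1]
      calc ∫ ω, h ω * (μ[Δ|ℱ t]) ω ∂μ ≤ ∫ ω, -ζ * h ω ∂μ := hdrift2
        _ = -ζ * ∫ ω, h ω ∂μ := integral_const_mul _ _
    -- combine
    have hw_int : Integrable (fun ω => h ω * (1 + lam * Δ ω + lam * ζ / 2)) μ := by
      have e : (fun ω => h ω * (1 + lam * Δ ω + lam * ζ / 2))
          = fun ω => (1 + lam * ζ / 2) * h ω + lam * (h ω * Δ ω) := by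
        funext ω; ring
      rw [e]
      exact (hh_int.const_mul _).add (hhΔ_int.const_mul lam)
    have step1 : ∫ ω, g (t + 1) ω ∂μ
        ≤ ∫ ω, (h ω * (1 + lam * Δ ω + lam * ζ / 2) + K) ∂μ :=
      integral_mono_ae (hgint (t + 1)) (hw_int.add (integrable_const K)) hpt
    have step2 : ∫ ω, (h ω * (1 + lam * Δ ω + lam * ζ / 2) + K) ∂μ
        = (1 + lam * ζ / 2) * ∫ ω, h ω ∂μ + lam * ∫ ω, h ω * Δ ω ∂μ + K := by
      rw [integral_add hw_int (integrable_const K), integral_const]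
      have e : (fun ω => h ω * (1 + lam * Δ ω + lam * ζ / 2))
          = fun ω => (1 + lam * ζ / 2) * h ω + lam * (h ω * Δ ω) := by
        funext ω; ring
      rw [e, integral_add (hh_int.const_mul _) (hhΔ_int.const_mul lam),
        integral_const_mul, integral_const_mul]
      simp [measure_univ]
    have hIh_nonneg : 0 ≤ ∫ ω, h ω ∂μ := integral_nonneg hh_nonneg
    have hIh_le : ∫ ω, h ω ∂μ ≤ ∫ ω, g t ω ∂μ :=
      integral_mono hh_int (hgint t) hh_le_g
    have step3 : (1 + lam * ζ / 2) * ∫ ω, h ω ∂μ + lam * ∫ ω, h ω * Δ ω ∂μ + K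
        ≤ ρ * ∫ ω, h ω ∂μ + K := by
      have h1 : lam * ∫ ω, h ω * Δ ω ∂μ ≤ lam * (-ζ * ∫ ω, h ω ∂μ) :=
        mul_le_mul_of_nonneg_left hint_hΔ hlam0.le
      rw [hρ_def]
      nlinarith [hIh_nonneg]
    have step4 : ρ * ∫ ω, h ω ∂μ + K ≤ ρ * ∫ ω, g t ω ∂μ + K := by
      have := mul_le_mul_of_nonneg_left hIh_le hρ_nonneg
      linarith
    linarith [step1, step2.le, step3, step4, step2.ge]
  -- uniform bound on ∫ g t
  obtain ⟨B, hB1, hBK⟩ : ∃ B : ℝ, 1 ≤ B ∧ K / (1 - ρ) ≤ B :=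
    ⟨max 1 (K / (1 - ρ)), le_max_left _ _, le_max_right _ _⟩
  have hBge : ∀ t, ∫ ω, g t ω ∂μ ≤ B := by
    intro t
    induction t with
    | zero =>
      have h1 : ∀ ω, g 0 ω ≤ 1 := by
        intro ω
        rw [hga, show (1:ℝ) = Real.exp 0 by simp]
        apply Real.exp_le_exp.mpr
        have h2 : Y 0 ω - R ω ≤ 0 := by linarith [hRY ω]
        nlinarith [hlam0.le]
      calc ∫ ω, g 0 ω ∂μ ≤ ∫ _, (1:ℝ) ∂μ :=
            integral_mono (hgint 0) (integrable_const 1) h1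
        _ = 1 := by simp
        _ ≤ B := hB1
    | succ t ih =>
      have h1 := key t
      have h2 : ρ * ∫ ω, g t ω ∂μ ≤ ρ * B := mul_le_mul_of_nonneg_left ih hρ_nonneg
      have h5 : (0:ℝ) < 1 - ρ := by linarith
      have h6 : K ≤ B * (1 - ρ) := (div_le_iff₀ h5).mp hBK
      nlinarith
  -- conclusion
  have hRint : Integrable (fun ω => R ω ^ 2) μ := by
    refine Integrable.mono'
      ((h0.const_mul 2).add (integrable_const (2 * A ^ 2)))
      ((continuous_pow 2).comp_stronglyMeasurable hRsm).aestronglyMeasurable ?_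
    filter_upwards with ω
    have h1 : R ω ≤ Y 0 ω + A := by
      rw [hRa]
      exact max_le (by linarith [hY_nonneg 0 ω, hA0.le]) (by linarith [hY_nonneg 0 ω])
    simp only [Pi.add_apply]
    rw [Real.norm_eq_abs, abs_of_nonneg (sq_nonneg _), ← hYa 0 ω]
    exact sq_le_two_sq_add_two_sq (hR_nonneg ω) (hY_nonneg 0 ω) hA0.le h1
  refine ⟨2 * ∫ ω, R ω ^ 2 ∂μ + 8 / lam ^ 2 * B, fun t => ?_⟩
  have hYtint : Integrable (fun ω => max (X t ω) 0 ^ 2) μ := by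
    refine Integrable.mono'
      ((h0.const_mul 2).add (integrable_const (2 * (t * b) ^ 2)))
      ((continuous_pow 2).comp_stronglyMeasurable (hYsmX t)).aestronglyMeasurable ?_
    filter_upwards [hYb t] with ω hω
    have htb : (0:ℝ) ≤ t * b := by positivity
    simp only [Pi.add_apply]
    rw [Real.norm_eq_abs, abs_of_nonneg (sq_nonneg _), ← hYa t ω, ← hYa 0 ω]
    have h1 : Y t ω ≤ Y 0 ω + t * b := by linarith
    exact sq_le_two_sq_add_two_sq (hY_nonneg t ω) (hY_nonneg 0 ω) htb h1
  have hRHSint : Integrable (fun ω => 2 * R ω ^ 2 + 8 / lam ^ 2 * g t ω) μ :=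
    (hRint.const_mul 2).add ((hgint t).const_mul (8 / lam ^ 2))
  have hpt2 : ∀ ω, max (X t ω) 0 ^ 2 ≤ 2 * R ω ^ 2 + 8 / lam ^ 2 * g t ω := by
    intro ω
    have h1 : Y t ω ≤ R ω + max (Y t ω - R ω) 0 := by
      have := le_max_left (Y t ω - R ω) (0:ℝ)
      linarith
    have h2 : (max (Y t ω - R ω) 0) ^ 2
        ≤ 4 / lam ^ 2 * Real.exp (lam * (Y t ω - R ω)) := sq_max_le_exp hlam0
    have h2' : (max (Y t ω - R ω) 0) ^ 2 ≤ 4 / lam ^ 2 * g t ω := by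
      rw [hga t ω]; exact h2
    rw [← hYa t ω]
    have hm : (0:ℝ) ≤ max (Y t ω - R ω) 0 := le_max_right _ _
    have hA2 : Y t ω ^ 2 ≤ 2 * R ω ^ 2 + 2 * max (Y t ω - R ω) 0 ^ 2 :=
      sq_le_two_sq_add_two_sq (hY_nonneg t ω) (hR_nonneg ω) hm h1
    have h2'' : 2 * max (Y t ω - R ω) 0 ^ 2 ≤ 8 / lam ^ 2 * g t ω := by
      calc 2 * max (Y t ω - R ω) 0 ^ 2 ≤ 2 * (4 / lam ^ 2 * g t ω) := by
            linarith only [h2']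
        _ = 8 / lam ^ 2 * g t ω := by ring
    linarith only [hA2, h2'']
  calc ∫ ω, max (X t ω) 0 ^ 2 ∂μ
      ≤ ∫ ω, (2 * R ω ^ 2 + 8 / lam ^ 2 * g t ω) ∂μ :=
        integral_mono hYtint hRHSint hpt2
    _ = 2 * ∫ ω, R ω ^ 2 ∂μ + 8 / lam ^ 2 * ∫ ω, g t ω ∂μ := by
        rw [integral_add (hRint.const_mul 2) ((hgint t).const_mul (8 / lam ^ 2)),
          integral_const_mul, integral_const_mul]
    _ ≤ 2 * ∫ ω, R ω ^ 2 ∂μ + 8 / lam ^ 2 * B := by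
        have h5 : (0:ℝ) ≤ 8 / lam ^ 2 := by positivity
        have h6 := mul_le_mul_of_nonneg_left (hBge t) h5
        linarith only [h6]
end
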